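/- Let a, b, Δt be real numbers with Δt > 0, a + b > 0, and a − b > 0, let B = [[a, b], [b, a]], and let M = exp(−Δt·B). For every finitely supported sequence ξ : ℤ → ℝ² (i.e., ξ_j = 0 for all but finitely many j), the total variation after applying M pointwise does not increase: Σ_{j∈ℤ} ‖M ξ_{j+1} − M ξ_j‖₁ ≤ Σ_{j∈ℤ} ‖ξ_{j+1} − ξ_j‖₁, where ‖(x, y)‖₁ = |x| + |y|. -/

import Mathlib

/-- The exact ODE step `M = exp(−Δt·B)` of `ξ_t = −Bξ`, with `B = [[a, b], [b, a]]`,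
`a + b > 0`, `a − b > 0`, is total-variation-diminishing on finitely supported sequences
`ξ : ℤ → ℝ²`, where the total variation is `Σ_j ‖ξ_{j+1} − ξ_j‖₁`, `‖(x,y)‖₁ = |x| + |y|`. -/
theorem ode_step_tvd (a b Δt : ℝ) (hΔt : 0 < Δt) (hab₁ : 0 < a + b) (hab₂ : 0 < a - b)
    (B : Matrix (Fin 2) (Fin 2) ℝ) (hB : B = !![a, b; b, a])
    (M : Matrix (Fin 2) (Fin 2) ℝ) (hM : M = NormedSpace.exp ((-Δt) • B))
    (ξ : ℤ → Fin 2 → ℝ) (hfin : (Function.support ξ).Finite) :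
    ∑' j : ℤ, (|(M.mulVec (ξ (j + 1)) - M.mulVec (ξ j)) 0| +
               |(M.mulVec (ξ (j + 1)) - M.mulVec (ξ j)) 1|) ≤
    ∑' j : ℤ, (|(ξ (j + 1) - ξ j) 0| + |(ξ (j + 1) - ξ j) 1|) := by
  -- Diagonalize: (-Δt) • B = P * D * P⁻¹
  set α : ℝ := Real.exp (-Δt * (a + b)) with hα
  set β : ℝ := Real.exp (-Δt * (a - b)) with hβ
  have hα1 : α ≤ 1 := Real.exp_le_one_iff.mpr (by nlinarith)
  have hβ1 : β ≤ 1 := Real.exp_le_one_iff.mpr (by nlinarith)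
  have hα0 : 0 < α := Real.exp_pos _
  have hβ0 : 0 < β := Real.exp_pos _
  set P : Matrix (Fin 2) (Fin 2) ℝ := !![1, 1; 1, -1] with hP
  set Q : Matrix (Fin 2) (Fin 2) ℝ := !![1/2, 1/2; 1/2, -1/2] with hQ
  have hPQ : P * Q = 1 := by
    ext i j
    fin_cases i <;> fin_cases j <;>
      simp [hP, hQ, Matrix.mul_apply, Fin.sum_univ_two, Matrix.one_apply] <;> norm_num
  have hUnit : IsUnit P := by
    rw [Matrix.isUnit_iff_isUnit_det]
    simp [hP, Matrix.det_fin_two_of, isUnit_iff_ne_zero]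
    norm_num
  have hPinv : P⁻¹ = Q := Matrix.inv_eq_right_inv hPQ
  set d : Fin 2 → ℝ := ![-Δt * (a + b), -Δt * (a - b)] with hd
  have hdecomp : (-Δt) • B = P * Matrix.diagonal d * P⁻¹ := by
    rw [hPinv]
    ext i j
    fin_cases i <;> fin_cases j <;>
      simp [hB, hP, hQ, hd, Matrix.mul_apply, Fin.sum_univ_two, Matrix.diagonal, Matrix.vecHead, Matrix.vecTail] <;> ring
  have hMeq : M = !![(α + β) / 2, (α - β) / 2; (α - β) / 2, (α + β) / 2] := by
    rw [hM, hdecomp, Matrix.exp_conj P (Matrix.diagonal d) hUnit, Matrix.exp_diagonal,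
      hPinv]
    have hde : NormedSpace.exp d = ![α, β] := by
      funext i
      fin_cases i <;>
        simp [Pi.coe_exp, hd, hα, hβ, Real.exp_eq_exp_ℝ]
    rw [hde]
    ext i j
    fin_cases i <;> fin_cases j <;>
      simp [hP, hQ, Matrix.mul_apply, Fin.sum_univ_two, Matrix.diagonal, Matrix.vecHead, Matrix.vecTail] <;> ring
  -- key pointwise bound
  have hpq : |(α + β) / 2| + |(α - β) / 2| ≤ 1 := by
    rcases le_total α β with h | h
    · rw [abs_of_pos (by linarith), abs_of_nonpos (by linarith)]; linarith
    · rw [abs_of_pos (by linarith), abs_of_nonneg (by linarith)]; linarith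
  have key : ∀ v : Fin 2 → ℝ, |M.mulVec v 0| + |M.mulVec v 1| ≤ |v 0| + |v 1| := by
    intro v
    have h0 : M.mulVec v 0 = (α + β) / 2 * v 0 + (α - β) / 2 * v 1 := by
      simp [hMeq, Matrix.mulVec, dotProduct, Fin.sum_univ_two]
    have h1 : M.mulVec v 1 = (α - β) / 2 * v 0 + (α + β) / 2 * v 1 := by
      simp [hMeq, Matrix.mulVec, dotProduct, Fin.sum_univ_two]
    rw [h0, h1]
    have e0 : |(α + β) / 2 * v 0 + (α - β) / 2 * v 1| ≤
        |(α + β) / 2| * |v 0| + |(α - β) / 2| * |v 1| := by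
      calc _ ≤ |(α + β) / 2 * v 0| + |(α - β) / 2 * v 1| := abs_add_le _ _
        _ = _ := by rw [abs_mul, abs_mul]
    have e1 : |(α - β) / 2 * v 0 + (α + β) / 2 * v 1| ≤
        |(α - β) / 2| * |v 0| + |(α + β) / 2| * |v 1| := by
      calc _ ≤ |(α - β) / 2 * v 0| + |(α + β) / 2 * v 1| := abs_add_le _ _
        _ = _ := by rw [abs_mul, abs_mul]
    nlinarith [abs_nonneg (v 0), abs_nonneg (v 1), abs_nonneg ((α + β) / 2),
      abs_nonneg ((α - β) / 2)]
  -- summability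
  set g : ℤ → ℝ := fun j => |(ξ (j + 1) - ξ j) 0| + |(ξ (j + 1) - ξ j) 1| with hg
  set f : ℤ → ℝ := fun j => |(M.mulVec (ξ (j + 1)) - M.mulVec (ξ j)) 0| +
      |(M.mulVec (ξ (j + 1)) - M.mulVec (ξ j)) 1| with hf
  have hfg : ∀ j, f j ≤ g j := by
    intro j
    have : M.mulVec (ξ (j + 1)) - M.mulVec (ξ j) = M.mulVec (ξ (j + 1) - ξ j) :=
      (Matrix.mulVec_sub M _ _).symm
    rw [hf]
    simp only [this]
    exact key _
  have hf0 : ∀ j, 0 ≤ f j := fun j => by positivity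
  have hg0 : ∀ j, 0 ≤ g j := fun j => by positivity
  set T : Finset ℤ := hfin.toFinset ∪ hfin.toFinset.image (· - 1) with hT
  have hgsum : Summable g := by
    apply summable_of_ne_finset_zero (s := T)
    intro j hj
    have h1 : ξ j = 0 := by
      by_contra h
      exact hj (Finset.mem_union_left _ (hfin.mem_toFinset.mpr h))
    have h2 : ξ (j + 1) = 0 := by
      by_contra h
      refine hj (Finset.mem_union_right _ ?_)
      exact Finset.mem_image.mpr ⟨j + 1, hfin.mem_toFinset.mpr h, by ring⟩
    simp [hg, h1, h2]
  have hfsum : Summable f := Summable.of_nonneg_of_le hf0 hfg hgsum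
  exact Summable.tsum_le_tsum hfg hfsum hgsum
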